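/- Let f : M → M be a continuous map on a compact metric space and let (φ_n) be a subadditive sequence of continuous functions on M. Define λ(x) = lim_{n→∞} φ_n(x)/n where it exists, and λ(ν) = inf_n (1/n)∫φ_n dν for invariant measures ν. Suppose (ν_k) is a sequence of f-invariant measures, A = {x : λ(x) < χ} for some χ ∈ ℝ, and suppose a limit measure μ of (ν_k) in the weak-* topology satisfies λ(x) ≤ 0 < χ for μ-a.e. x. If moreover each ν_k gives the invariant set A measure at most 1 − ε₀ for some fixed ε₀ > 0, then a contradiction arises; equivalently: if ν_k → μ weakly-* and λ(x) ≤ 0 μ-a.e., then ν_k({x : λ(x) < χ}) → 1 as k → ∞ for every χ > 0. -/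

import Mathlib

open MeasureTheory Filter
open scoped ENNReal

/-- Let `(φ_n)` be a subadditive sequence of continuous functions on a compact metric space,
with asymptotic exponent `lam x = lim φ_n(x)/n` (existing a.e. for every invariant measure
and invariant). If invariant measures `ν_k` converge weak-* to `μ` and `lam ≤ 0` `μ`-a.e.,
then `ν_k({x : lam x < χ}) → 1` for every `χ > 0`. -/
theorem measure_of_small_exponent_tendsto_one
    {M : Type*} [MetricSpace M] [CompactSpace M] [MeasurableSpace M] [BorelSpace M]
    (f : M → M) (hf : Continuous f)
    (φ : ℕ → C(M, ℝ))
    (hsub : ∀ n m : ℕ, 0 < n → 0 < m → ∀ x, φ (n + m) x ≤ φ n x + φ m (f^[n] x))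
    (lam : M → ℝ) (hlam_meas : Measurable lam)
    (hlam_inv : ∀ x, lam (f x) = lam x)
    (hlam_lim : ∀ ν : ProbabilityMeasure M,
      Measure.map f (ν : Measure M) = (ν : Measure M) →
      ∀ᵐ x ∂(ν : Measure M),
        Tendsto (fun n : ℕ => φ n x / (n : ℝ)) atTop (nhds (lam x)))
    (hlam_int : ∀ ν : ProbabilityMeasure M,
      Measure.map f (ν : Measure M) = (ν : Measure M) →
      ∫ x, lam x ∂(ν : Measure M) =
        ⨅ n : ℕ+, (((n : ℕ) : ℝ))⁻¹ * ∫ x, φ (n : ℕ) x ∂(ν : Measure M))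
    (ν : ℕ → ProbabilityMeasure M) (μ : ProbabilityMeasure M)
    (hinv : ∀ k, Measure.map f (ν k : Measure M) = (ν k : Measure M))
    (hconv : Tendsto ν atTop (nhds μ))
    (hμ : ∀ᵐ x ∂(μ : Measure M), lam x ≤ 0) :
    ∀ χ : ℝ, 0 < χ →
      Tendsto (fun k => (ν k : Measure M) {x | lam x < χ}) atTop (nhds (1 : ℝ≥0∞)) := by
  intro χ hχ
  set C1 : ℝ := ‖φ 1‖ with hC1
  have hφ1 : ∀ x, φ 1 x ≤ C1 := fun x =>
    (le_abs_self _).trans (by simpa [Real.norm_eq_abs] using (φ 1).norm_coe_le_norm x)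
  -- pointwise linear upper bound from subadditivity
  have hφn : ∀ n : ℕ, 0 < n → ∀ x, φ n x ≤ n * C1 := by
    intro n
    induction n with
    | zero => exact fun h => absurd h (lt_irrefl 0)
    | succ m ih =>
      intro _ x
      rcases Nat.eq_zero_or_pos m with hm | hm
      · subst hm; simpa using hφ1 x
      · have h1 := hsub m 1 hm one_pos x
        have h2 := ih hm x
        have h3 := hφ1 (f^[m] x)
        push_cast
        push_cast at h2
        nlinarith
  set B : Set M := {x | χ ≤ lam x} with hB
  have hBmeas : MeasurableSet B := measurableSet_le measurable_const hlam_meas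
  have hBinv : f ⁻¹' B = B := by
    ext x; simp [hB, Set.mem_preimage, hlam_inv x]
  -- lam is bounded above by C1 almost everywhere w.r.t. any invariant measure
  have hlam_le : ∀ m0 : ProbabilityMeasure M, Measure.map f (m0 : Measure M) = (m0 : Measure M) →
      ∀ᵐ x ∂(m0 : Measure M), lam x ≤ C1 := by
    intro m0 hm0
    filter_upwards [hlam_lim m0 hm0] with x hx
    refine le_of_tendsto hx ?_
    filter_upwards [eventually_ge_atTop 1] with n hn
    have hn' : (0:ℝ) < n := by exact_mod_cast hn
    rw [div_le_iff₀ hn']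
    calc φ n x ≤ n * C1 := hφn n hn x
    _ = C1 * n := mul_comm _ _
  -- integrability of continuous functions
  have hint_cont : ∀ (g : C(M, ℝ)) (m0 : Measure M) [IsFiniteMeasure m0],
      Integrable (⇑g) m0 := by
    intro g m0 _
    have := (BoundedContinuousFunction.mkOfCompact g).integrable m0
    exact this
  -- key estimate
  have key : ∀ k, ∀ n : ℕ, 0 < n →
      χ * n * ((ν k : Measure M) B).toReal ≤ ∫ x, max (φ n x) 0 ∂(ν k : Measure M) := by
    intro k n hn
    have hnpos : (0:ℝ) < n := by exact_mod_cast hn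
    set gn : C(M, ℝ) := ⟨fun x => max (φ n x) 0, (φ n).continuous.max continuous_const⟩ with hgn
    have hint_g : Integrable (fun x => max (φ n x) 0) (ν k : Measure M) := hint_cont gn _
    have hg_nonneg : 0 ≤ᵐ[(ν k : Measure M)] fun x => max (φ n x) 0 :=
      Filter.Eventually.of_forall fun x => le_max_right _ _
    rcases eq_or_ne ((ν k : Measure M) B) 0 with h0 | h0
    · rw [h0]
      simpa using integral_nonneg (μ := (ν k : Measure M)) (fun x => le_max_right (φ n x) 0)
    set β : ℝ≥0∞ := (ν k : Measure M) B with hβ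
    have hβtop : β ≠ ∞ := measure_ne_top _ _
    have hβpos : 0 < β.toReal := ENNReal.toReal_pos h0 hβtop
    have hprob : IsProbabilityMeasure (β⁻¹ • (ν k : Measure M).restrict B) := by
      constructor
      rw [Measure.smul_apply, Measure.restrict_apply_univ, smul_eq_mul,
        ENNReal.inv_mul_cancel h0 hβtop]
    set ν' : ProbabilityMeasure M := ⟨β⁻¹ • (ν k : Measure M).restrict B, hprob⟩ with hν'
    have hν'coe : (ν' : Measure M) = β⁻¹ • (ν k : Measure M).restrict B := rfl
    have hres : Measure.map f ((ν k : Measure M).restrict B) = (ν k : Measure M).restrict B := by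
      have h := Measure.restrict_map (μ := (ν k : Measure M)) hf.measurable hBmeas
      rw [hinv k, hBinv] at h
      exact h.symm
    have hν'inv : Measure.map f (ν' : Measure M) = (ν' : Measure M) := by
      rw [hν'coe, Measure.map_smul, hres]
    have hae_ge : ∀ᵐ x ∂(ν' : Measure M), χ ≤ lam x := by
      rw [ae_iff]
      have hmeas' : MeasurableSet {x | ¬ χ ≤ lam x} := hBmeas.compl
      rw [hν'coe, Measure.smul_apply, Measure.restrict_apply hmeas']
      have : {x | ¬ χ ≤ lam x} ∩ B = ∅ := by
        ext x; simp only [Set.mem_inter_iff, Set.mem_setOf_eq, Set.mem_empty_iff_false,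
          iff_false, not_and]
        intro h1 h2; exact h1 h2
      rw [this]; simp
    have hK : Integrable lam (ν' : Measure M) := by
      refine Integrable.mono' (integrable_const (max |χ| |C1|))
        hlam_meas.aestronglyMeasurable ?_
      filter_upwards [hae_ge, hlam_le ν' hν'inv] with x h1 h2
      rw [Real.norm_eq_abs, abs_le]
      have ha := le_max_left |χ| |C1|
      have hb := le_max_right |χ| |C1|
      have hc := neg_abs_le χ
      have hd := le_abs_self C1
      constructor <;> linarith
    have hchi_le : χ ≤ ∫ x, lam x ∂(ν' : Measure M) := by
      have h := integral_mono_ae (integrable_const χ) hK hae_ge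
      simpa [measure_univ] using h
    have hint := hlam_int ν' hν'inv
    have hbdd : BddBelow (Set.range fun n : ℕ+ =>
        (((n : ℕ) : ℝ))⁻¹ * ∫ x, φ (n : ℕ) x ∂(ν' : Measure M)) := by
      by_contra hb
      rw [hint, Real.iInf_of_not_bddBelow hb] at hchi_le
      linarith
    have hchi_n : χ ≤ ((n : ℝ))⁻¹ * ∫ x, φ n x ∂(ν' : Measure M) := by
      have h := ciInf_le hbdd (⟨n, hn⟩ : ℕ+)
      simpa using (hchi_le.trans_eq hint).trans h
    have hsmul : ∫ x, φ n x ∂(ν' : Measure M)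
        = (β.toReal)⁻¹ * ∫ x, φ n x ∂((ν k : Measure M).restrict B) := by
      rw [hν'coe, integral_smul_measure, ENNReal.toReal_inv, smul_eq_mul]
    have hI : χ * n * β.toReal ≤ ∫ x, φ n x ∂((ν k : Measure M).restrict B) := by
      rw [hsmul] at hchi_n
      have h := mul_le_mul_of_nonneg_left hchi_n
        (le_of_lt (mul_pos hnpos hβpos))
      have hne1 : (n:ℝ) ≠ 0 := ne_of_gt hnpos
      have hne2 : β.toReal ≠ 0 := ne_of_gt hβpos
      field_simp at h
      nlinarith
    have hφintB : Integrable (⇑(φ n)) ((ν k : Measure M).restrict B) :=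
      (hint_cont (φ n) (ν k : Measure M)).restrict
    have hgintB : Integrable (fun x => max (φ n x) 0) ((ν k : Measure M).restrict B) :=
      hint_g.restrict
    have h2 : ∫ x, φ n x ∂((ν k : Measure M).restrict B)
        ≤ ∫ x, max (φ n x) 0 ∂((ν k : Measure M).restrict B) :=
      integral_mono hφintB hgintB (fun x => le_max_left _ _)
    have h3 : ∫ x, max (φ n x) 0 ∂((ν k : Measure M).restrict B)
        ≤ ∫ x, max (φ n x) 0 ∂(ν k : Measure M) :=
      setIntegral_le_integral hint_g hg_nonneg
    linarith
  -- μ is invariant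
  have hμinv : Measure.map f (μ : Measure M) = (μ : Measure M) := by
    have hc := ProbabilityMeasure.tendsto_map_of_tendsto_of_continuous ν μ hconv hf
    have heq : ∀ k, (ν k).map hf.measurable.aemeasurable = ν k := by
      intro k
      apply Subtype.ext
      exact (ProbabilityMeasure.toMeasure_map (ν k) hf.measurable.aemeasurable).trans (hinv k)
    rw [tendsto_congr heq] at hc
    have := tendsto_nhds_unique hconv hc
    calc Measure.map f (μ : Measure M)
        = ((μ.map hf.measurable.aemeasurable) : Measure M) :=
          (ProbabilityMeasure.toMeasure_map μ hf.measurable.aemeasurable).symm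
      _ = (μ : Measure M) := by rw [← this]
  have hμlim := hlam_lim μ hμinv
  set Cb : ℝ := max C1 0 with hCb
  have hCbnn : 0 ≤ Cb := le_max_right _ _
  -- dominated convergence on μ
  have htend0 : Tendsto (fun n : ℕ => ((n:ℝ))⁻¹ * ∫ x, max (φ n x) 0 ∂(μ : Measure M))
      atTop (nhds 0) := by
    have hmain : Tendsto (fun n : ℕ => ∫ x, ((n:ℝ))⁻¹ * max (φ n x) 0 ∂(μ : Measure M))
        atTop (nhds (∫ _x, (0:ℝ) ∂(μ : Measure M))) := by
      apply tendsto_integral_of_dominated_convergence (fun _ => Cb)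
      · intro n
        exact (((φ n).continuous.max continuous_const).const_smul
          ((n:ℝ))⁻¹).aestronglyMeasurable
      · exact integrable_const _
      · intro n
        filter_upwards with x
        have hmx : 0 ≤ max (φ n x) 0 := le_max_right _ _
        rw [Real.norm_eq_abs, abs_of_nonneg (by positivity)]
        rcases Nat.eq_zero_or_pos n with h | h
        · subst h; simpa using hCbnn
        · have hnpos : (0:ℝ) < n := by exact_mod_cast h
          have h1 : max (φ n x) 0 ≤ n * Cb := by
            refine max_le ((hφn n h x).trans ?_) (by positivity)
            have : C1 ≤ Cb := le_max_left _ _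
            nlinarith
          calc ((n:ℝ))⁻¹ * max (φ n x) 0 ≤ ((n:ℝ))⁻¹ * (n * Cb) := by
                exact mul_le_mul_of_nonneg_left h1 (by positivity)
          _ = Cb := by field_simp
      · filter_upwards [hμlim, hμ] with x hx hx0
        have hmax : Tendsto (fun n : ℕ => max (φ n x / n) 0) atTop
            (nhds (max (lam x) 0)) := hx.max tendsto_const_nhds
        rw [max_eq_right hx0] at hmax
        apply hmax.congr
        intro n
        rw [mul_max_of_nonneg _ _ (by positivity : (0:ℝ) ≤ ((n:ℝ))⁻¹), mul_zero,
          inv_mul_eq_div]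
    have heq : ∀ n : ℕ, ∫ x, ((n:ℝ))⁻¹ * max (φ n x) 0 ∂(μ : Measure M)
        = ((n:ℝ))⁻¹ * ∫ x, max (φ n x) 0 ∂(μ : Measure M) := fun n =>
      integral_const_mul _ _
    rw [tendsto_congr heq] at hmain
    simpa using hmain
  -- the measures of B tend to zero
  have hB0 : Tendsto (fun k => (ν k : Measure M) B) atTop (nhds 0) := by
    rw [ENNReal.tendsto_nhds_zero]
    intro ε hε
    rcases le_or_gt 1 ε with h1 | h1
    · filter_upwards with k
      exact (prob_le_one).trans h1
    · have hεtop : ε ≠ ∞ := (h1.trans (by norm_num)).ne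
      have hδpos : 0 < ε.toReal := ENNReal.toReal_pos hε.ne' hεtop
      set δ := ε.toReal with hδ
      have hev : ∀ᶠ n : ℕ in atTop,
          ((n:ℝ))⁻¹ * ∫ x, max (φ n x) 0 ∂(μ : Measure M) < χ * δ / 2 :=
        htend0.eventually_lt_const (by positivity)
      obtain ⟨n, hn1, hn2⟩ := ((eventually_ge_atTop 1).and hev).exists
      have hnpos : (0:ℝ) < n := by exact_mod_cast hn1
      set G : BoundedContinuousFunction M ℝ := BoundedContinuousFunction.mkOfCompact
        ⟨fun x => max (φ n x) 0, (φ n).continuous.max continuous_const⟩ with hG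
      have hGeq : ∀ (m0 : Measure M), ∫ x, G x ∂m0 = ∫ x, max (φ n x) 0 ∂m0 := by
        intro m0; rfl
      have hGconv : Tendsto (fun k => ∫ x, G x ∂(ν k : Measure M)) atTop
          (nhds (∫ x, G x ∂(μ : Measure M))) :=
        ProbabilityMeasure.tendsto_iff_forall_integral_tendsto.mp hconv G
      have hGμ : ∫ x, G x ∂(μ : Measure M) < n * (χ * δ / 2) := by
        rw [hGeq]
        have hne : (n:ℝ) ≠ 0 := ne_of_gt hnpos
        have hmm := mul_lt_mul_of_pos_left hn2 hnpos
        rw [← mul_assoc, mul_inv_cancel₀ hne, one_mul] at hmm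
        linarith
      have hev2 : ∀ᶠ k in atTop, ∫ x, G x ∂(ν k : Measure M) < n * (χ * δ / 2) :=
        hGconv.eventually_lt_const hGμ
      filter_upwards [hev2] with k hk
      have hkey := key k n hn1
      rw [← hGeq (ν k : Measure M)] at hkey
      have hβtop : (ν k : Measure M) B ≠ ∞ := measure_ne_top _ _
      have hcn : 0 < χ * (n:ℝ) := mul_pos hχ hnpos
      have h5 : (χ * (n:ℝ)) * ((ν k : Measure M) B).toReal < (χ * (n:ℝ)) * (δ/2) := by
        calc (χ * (n:ℝ)) * ((ν k : Measure M) B).toReal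
            = χ * (n:ℝ) * ((ν k : Measure M) B).toReal := by ring
          _ ≤ ∫ x, G x ∂(ν k : Measure M) := hkey
          _ < n * (χ * δ / 2) := hk
          _ = (χ * (n:ℝ)) * (δ/2) := by ring
      have hβδ : ((ν k : Measure M) B).toReal < δ := by
        have h6 := lt_of_mul_lt_mul_left h5 (le_of_lt hcn)
        linarith
      rw [← ENNReal.toReal_le_toReal hβtop hεtop]
      exact le_of_lt hβδ
  -- conclude
  have hset : {x | lam x < χ} = Bᶜ := by
    ext x; simp [hB, not_le]
  have hcompl : ∀ k, (ν k : Measure M) {x | lam x < χ} = 1 - (ν k : Measure M) B := by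
    intro k
    rw [hset, measure_compl hBmeas (measure_ne_top _ _), measure_univ]
  have hfinal := ((ENNReal.continuous_sub_left
    (by norm_num : (1:ℝ≥0∞) ≠ ∞)).tendsto 0).comp hB0
  simp only [Function.comp_def, tsub_zero] at hfinal
  rw [tendsto_congr hcompl]
  exact hfinal
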